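/- Let d ≡ 2 (mod 6) satisfy condition (**), and let r = 2^s * q * r0 where q consists of all prime factors of r congruent to 1 mod 3 and r0 consists of all odd prime factors of r congruent to 2 mod 3. Then there exist integers n and x such that 3*x^2*(r0^2 - 2*n*d*q^2) + 1 ≡ 0 (mod 2*d*r^2). -/

import Mathlib

/-- Helper: coprimality of naturals from absence of common prime factors. -/
lemma aux_nat_coprime (a b : ℕ) (h : ∀ p : ℕ, p.Prime → p ∣ a → p ∣ b → False) :
    Nat.Coprime a b := by
  by_contra hg
  have hp := Nat.minFac_prime hg
  exact h _ hp ((Nat.minFac_dvd _).trans (Nat.gcd_dvd_left a b))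
    ((Nat.minFac_dvd _).trans (Nat.gcd_dvd_right a b))

/-- Helper: CRT-style combination for `y^2 + 3`. -/
lemma aux_crt3 {a b y1 y2 : ℤ} (hab : IsCoprime a b)
    (h1 : a ∣ y1 ^ 2 + 3) (h2 : b ∣ y2 ^ 2 + 3) : ∃ y : ℤ, a * b ∣ y ^ 2 + 3 := by
  obtain ⟨u, v, huv⟩ := id hab
  refine ⟨y2 * u * a + y1 * v * b, hab.mul_dvd ?_ ?_⟩
  · have hya : a ∣ (y2 * u * a + y1 * v * b) - y1 :=
      ⟨u * (y2 - y1), by linear_combination y1 * huv⟩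
    obtain ⟨k, hk⟩ := hya
    obtain ⟨c, hc⟩ := h1
    exact ⟨c + k * ((y2 * u * a + y1 * v * b) + y1), by linear_combination hc + ((y2*u*a + y1*v*b) + y1) * hk⟩
  · have hyb : b ∣ (y2 * u * a + y1 * v * b) - y2 :=
      ⟨v * (y1 - y2), by linear_combination y2 * huv⟩
    obtain ⟨k, hk⟩ := hyb
    obtain ⟨c, hc⟩ := h2
    exact ⟨c + k * ((y2 * u * a + y1 * v * b) + y2), by linear_combination hc + ((y2*u*a + y1*v*b) + y2) * hk⟩

/-- -3 is a square mod a prime p ≡ 1 (mod 3). -/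
lemma aux_sq_neg3_prime {p : ℕ} (hp : p.Prime) (h1 : p % 3 = 1) :
    ∃ y : ℤ, (p : ℤ) ∣ y ^ 2 + 3 := by
  haveI : Fact p.Prime := ⟨hp⟩
  haveI : Fact (Nat.Prime 3) := ⟨by norm_num⟩
  have hcard : 3 ∣ Fintype.card (ZMod p)ˣ := by
    rw [ZMod.card_units_eq_totient, Nat.totient_prime hp]
    omega
  obtain ⟨ω, hω⟩ := exists_prime_orderOf_dvd_card 3 hcard
  have hω3 : ((ω : (ZMod p)ˣ) : ZMod p) ^ 3 = 1 := by
    have h := pow_orderOf_eq_one ω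
    rw [hω] at h
    have h' := congrArg Units.val h
    simpa using h'
  have hω1 : ((ω : (ZMod p)ˣ) : ZMod p) ≠ 1 := by
    intro h
    have h' : (ω : (ZMod p)ˣ) = 1 := Units.ext h
    rw [h', orderOf_one] at hω
    norm_num at hω
  set a : ZMod p := ((ω : (ZMod p)ˣ) : ZMod p) with ha
  have key : a ^ 2 + a + 1 = 0 := by
    have h0 : (a - 1) * (a ^ 2 + a + 1) = 0 := by linear_combination hω3
    rcases mul_eq_zero.mp h0 with h | h
    · exact absurd (sub_eq_zero.mp h) hω1
    · exact h
  refine ⟨((2 * a + 1 : ZMod p).val : ℤ), ?_⟩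
  rw [← ZMod.intCast_zmod_eq_zero_iff_dvd]
  push_cast
  rw [ZMod.natCast_val, ZMod.cast_id]
  linear_combination 4 * key

/-- -3 is a square mod p^n for prime p ≡ 1 (mod 3). -/
lemma aux_sq_neg3_pow {p : ℕ} (hp : p.Prime) (h1 : p % 3 = 1) (n : ℕ) :
    ∃ y : ℤ, (p : ℤ) ^ n ∣ y ^ 2 + 3 := by
  induction n with
  | zero => exact ⟨0, by simp⟩
  | succ n ih =>
    rcases Nat.eq_zero_or_pos n with hn | hn
    · subst hn
      obtain ⟨y, hy⟩ := aux_sq_neg3_prime hp h1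
      exact ⟨y, by simpa using hy⟩
    obtain ⟨y, c, hc⟩ := ih
    have hpne3 : p ≠ 3 := by omega
    have hpy : ¬ (p : ℤ) ∣ y := by
      intro hdvd
      have hyy : (p : ℤ) ∣ y ^ 2 := by
        rw [sq]; exact hdvd.mul_left y
      have hpn1 : (p : ℤ) ∣ y ^ 2 + 3 := by
        refine dvd_trans ?_ ⟨c, hc⟩
        exact dvd_pow_self _ (by omega)
      have hp3 : (p : ℤ) ∣ 3 := (dvd_add_right hyy).mp hpn1
      have h3' : p ∣ 3 := by exact_mod_cast hp3
      have := Nat.le_of_dvd (by norm_num) h3'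
      have := hp.two_le
      omega
    have hp2 : ¬ (p : ℤ) ∣ 2 := by
      intro h
      have h2' : p ∣ 2 := by exact_mod_cast h
      have := Nat.le_of_dvd (by norm_num) h2'
      have := hp.two_le
      omega
    have hcop : IsCoprime ((p : ℤ)) (2 * y) := by
      rw [Int.isCoprime_iff_gcd_eq_one]
      have : Nat.Coprime p (2 * y).natAbs := by
        rw [Nat.Prime.coprime_iff_not_dvd hp]
        intro hdd
        have : (p : ℤ) ∣ 2 * y := by
          rw [← Int.natAbs_dvd_natAbs]; simpa using hdd
        rcases (Int.Prime.dvd_mul' hp this) with h | h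
        · exact hp2 h
        · exact hpy h
      simpa [Int.gcd] using this
    obtain ⟨u, v, huv⟩ := hcop
    refine ⟨y + (-c * v) * (p : ℤ) ^ n, ?_⟩
    have h2n : (p : ℤ) ^ (n + 1) ∣ (p : ℤ) ^ (2 * n) := pow_dvd_pow _ (by omega)
    obtain ⟨w, hw⟩ := h2n
    refine ⟨c * u + (-c * v) ^ 2 * w, ?_⟩
    have hP1 : (p : ℤ) ^ (n + 1) = (p : ℤ) ^ n * (p : ℤ) := pow_succ _ _
    have hP2 : (p : ℤ) ^ (2 * n) = ((p : ℤ) ^ n) ^ 2 := by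
      rw [two_mul, pow_add, sq]
    rw [hP1] at hw ⊢
    rw [hP2] at hw
    linear_combination hc + (-c * v) ^ 2 * hw + (-((p:ℤ)^n * c)) * huv

/-- -3 is a square mod M when every prime factor of M is ≡ 1 (mod 3). -/
lemma aux_sq_neg3 (M : ℕ) (h : ∀ p : ℕ, p.Prime → p ∣ M → p % 3 = 1) :
    ∃ y : ℤ, (M : ℤ) ∣ y ^ 2 + 3 := by
  induction M using Nat.recOnPosPrimePosCoprime with
  | prime_pow p n hpp hn =>
    have hp3 : p % 3 = 1 := h p hpp (dvd_pow_self _ (by omega))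
    obtain ⟨y, hy⟩ := aux_sq_neg3_pow hpp hp3 n
    exact ⟨y, by push_cast; exact hy⟩
  | zero =>
    have := h 2 Nat.prime_two (dvd_zero 2)
    omega
  | one => exact ⟨0, by simp⟩
  | coprime a b ha hb hab iha ihb =>
    obtain ⟨y1, hy1⟩ := iha fun p hpp hpd => h p hpp (hpd.mul_right b)
    obtain ⟨y2, hy2⟩ := ihb fun p hpp hpd => h p hpp (hpd.mul_left a)
    obtain ⟨y, hy⟩ := aux_crt3 (Nat.isCoprime_iff_coprime.mpr hab) hy1 hy2
    exact ⟨y, by push_cast; exact hy⟩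

theorem stmt_6 (d : ℤ) (hd : 0 < d) (hd6 : d % 6 = 2)
    (heven : 2 ∣ d) (h4 : ¬ (4 ∣ d)) (h9 : ¬ (9 ∣ d))
    (hp : ∀ p : ℕ, p.Prime → Odd p → p % 3 = 2 → ¬ ((p : ℤ) ∣ d))
    (r q r0 : ℕ) (s : ℕ) (hr : 0 < r) (hrfac : r = 2 ^ s * q * r0)
    (hq : ∀ p : ℕ, p.Prime → p ∣ q → p % 3 = 1)
    (hr0 : ∀ p : ℕ, p.Prime → p ∣ r0 → Odd p ∧ p % 3 = 2) :
    ∃ n x : ℤ, 3 * x ^ 2 * ((r0 : ℤ) ^ 2 - 2 * n * d * (q : ℤ) ^ 2) + 1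
      ≡ 0 [ZMOD 2 * d * (r : ℤ) ^ 2] := by
  -- Extract natural number structure of d
  obtain ⟨dm, hdm⟩ := heven   -- d = 2 * dm
  have hdm0 : 0 < dm := by omega
  set m : ℕ := dm.toNat with hm
  have hdmz : dm = (m : ℤ) := by simp [hm, Int.toNat_of_nonneg hdm0.le]
  have hdz : d = 2 * (m : ℤ) := by rw [hdm, hdmz]
  -- m is odd
  have hmodd : ¬ 2 ∣ m := by
    intro ⟨k, hk⟩
    exact h4 ⟨(k : ℤ), by rw [hdz, hk]; push_cast; ring⟩
  -- d mod 3 = 2, so 3 ∤ d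
  have hd3 : ¬ (3 : ℤ) ∣ d := by omega
  -- every prime factor of m is ≡ 1 mod 3
  have hm3 : ∀ p : ℕ, p.Prime → p ∣ m → p % 3 = 1 := by
    intro p hpp hpdvd
    have hpd : (p : ℤ) ∣ d := by
      obtain ⟨k, hk⟩ := hpdvd
      exact ⟨2 * (k : ℤ), by rw [hdz, hk]; push_cast; ring⟩
    have hp2 : p ≠ 2 := by
      rintro rfl
      exact hmodd hpdvd
    have hpodd : Odd p := hpp.odd_of_ne_two hp2
    have hp3 : p ≠ 3 := by
      rintro rfl
      exact hd3 hpd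
    have hmod : p % 3 = 0 ∨ p % 3 = 1 ∨ p % 3 = 2 := by omega
    rcases hmod with h | h | h
    · exfalso
      have : 3 ∣ p := Nat.dvd_of_mod_eq_zero h
      have := (Nat.prime_dvd_prime_iff_eq (by norm_num) hpp).mp this
      omega
    · exact h
    · exact absurd hpd (hp p hpp hpodd h)
  -- q and r0 are positive
  have hq0 : 0 < q := Nat.pos_of_ne_zero fun h => by simp [hrfac, h] at hr
  have hr00 : 0 < r0 := Nat.pos_of_ne_zero fun h => by simp [hrfac, h] at hr
  -- every prime factor of M := m * q^2 is ≡ 1 mod 3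
  have hM3 : ∀ p : ℕ, p.Prime → p ∣ m * q ^ 2 → p % 3 = 1 := by
    intro p hpp hpd
    rcases hpp.dvd_mul.mp hpd with h | h
    · exact hm3 p hpp h
    · exact hq p hpp (hpp.dvd_of_dvd_pow h)
  -- square root of -3 mod m*q^2
  obtain ⟨y0, hy0⟩ := aux_sq_neg3 (m * q ^ 2) hM3
  -- m*q^2 is odd
  have hModdN : ¬ 2 ∣ m * q ^ 2 := by
    intro h
    rcases Nat.prime_two.dvd_mul.mp h with h | h
    · exact hmodd h
    · have := hq 2 Nat.prime_two (Nat.prime_two.dvd_of_dvd_pow h)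
      omega
  have hcop4M : IsCoprime (4 : ℤ) ((m : ℤ) * (q : ℤ) ^ 2) := by
    have h2 : IsCoprime (2 : ℤ) ((m : ℤ) * (q : ℤ) ^ 2) := by
      have : Nat.Coprime 2 (m * q ^ 2) := (Nat.Prime.coprime_iff_not_dvd Nat.prime_two).mpr hModdN
      have := Nat.isCoprime_iff_coprime.mpr this
      push_cast at this
      exact this
    have h4' : IsCoprime ((2 : ℤ) ^ 2) ((m : ℤ) * (q : ℤ) ^ 2) := h2.pow_left
    norm_num at h4'
    exact h4'
  -- square root of -3 mod 4*m*q^2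
  have hy0' : ((m : ℤ) * (q : ℤ) ^ 2) ∣ y0 ^ 2 + 3 := by push_cast at hy0; exact hy0
  obtain ⟨Y, hY⟩ := aux_crt3 hcop4M (y1 := 1) (by norm_num) hy0'
  -- 3 * r0 is coprime to 4 * m * q^2
  have hcop3r0 : Nat.Coprime (3 * r0) (4 * (m * q ^ 2)) := by
    apply aux_nat_coprime
    intro p hpp hpa hpb
    have hbcase : p = 2 ∨ p % 3 = 1 := by
      rcases hpp.dvd_mul.mp hpb with h | h
      · left
        have h2 : p ∣ 2 ^ 2 := by simpa using h
        exact (Nat.prime_dvd_prime_iff_eq hpp Nat.prime_two).mp (hpp.dvd_of_dvd_pow h2)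
      · right; exact hM3 p hpp h
    rcases hpp.dvd_mul.mp hpa with h | h
    · have hp3 : p = 3 := (Nat.prime_dvd_prime_iff_eq hpp (by norm_num)).mp h
      subst hp3
      rcases hbcase with h' | h' <;> omega
    · obtain ⟨hodd, h2⟩ := hr0 p hpp h
      rcases hbcase with rfl | h1
      · simp [Nat.odd_iff] at hodd
      · omega
  -- cast coprimality to ℤ
  have hcop3r0' : IsCoprime ((3 : ℤ) * (r0 : ℤ)) (4 * ((m : ℤ) * (q : ℤ) ^ 2)) := by
    have h' := Nat.isCoprime_iff_coprime.mpr hcop3r0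
    push_cast at h'
    convert h' using 2 <;> ring
  obtain ⟨v, w, hvw⟩ := id hcop3r0'
  -- x0 := Y * v satisfies 4mq² ∣ 3 x0² r0² + 1
  have c3 : IsCoprime ((4 : ℤ) * ((m : ℤ) * (q : ℤ) ^ 2)) (3 : ℤ) := by
    have hn : Nat.Coprime 3 (4 * (m * q ^ 2)) :=
      Nat.Coprime.coprime_dvd_left (dvd_mul_right 3 r0) hcop3r0
    have h' := Nat.isCoprime_iff_coprime.mpr hn
    push_cast at h'
    exact h'.symm
  have h40 : (4 * ((m:ℤ) * (q:ℤ)^2)) ∣ 3 * (Y*v)^2 * (r0:ℤ)^2 + 1 := by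
    have hdd : (4 * ((m:ℤ)*(q:ℤ)^2)) ∣ 3 * (3 * (Y*v)^2 * (r0:ℤ)^2 + 1) := by
      obtain ⟨k, hk⟩ := hY
      exact ⟨k + Y^2*w*(w*(4*((m:ℤ)*(q:ℤ)^2)) - 2),
        by linear_combination hk + (Y^2*(v*(3*(r0:ℤ)) + 1 - w*(4*((m:ℤ)*(q:ℤ)^2)))) * hvw⟩
    exact c3.dvd_of_dvd_mul_left hdd
  -- CRT: adjust x to be ≡ 1 mod r0
  have hcopr0M : IsCoprime ((4 : ℤ) * ((m : ℤ) * (q : ℤ) ^ 2)) ((r0 : ℤ)) := by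
    have hn : Nat.Coprime r0 (4 * (m * q ^ 2)) :=
      Nat.Coprime.coprime_dvd_left (dvd_mul_left r0 3) hcop3r0
    have h' := Nat.isCoprime_iff_coprime.mpr hn
    push_cast at h'
    exact h'.symm
  obtain ⟨u, t, hut⟩ := id hcopr0M
  set x : ℤ := Y*v*t*(r0:ℤ) + u*(4*((m:ℤ)*(q:ℤ)^2)) with hxdef
  have hxx0 : (4*((m:ℤ)*(q:ℤ)^2)) ∣ x - Y*v := ⟨(1 - Y*v)*u, by linear_combination (Y*v) * hut⟩
  have hx1 : (r0:ℤ) ∣ x - 1 := ⟨t*(Y*v - 1), by linear_combination hut⟩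
  have h4Mx : (4*((m:ℤ)*(q:ℤ)^2)) ∣ 3 * x^2 * (r0:ℤ)^2 + 1 := by
    obtain ⟨c0, hc0⟩ := h40
    obtain ⟨k, hk⟩ := hxx0
    exact ⟨c0 + 3*(r0:ℤ)^2*k*(x + Y*v), by linear_combination hc0 + (3*(r0:ℤ)^2*(x + Y*v)) * hk⟩
  -- x is odd
  have h4x : (4:ℤ) ∣ 3 * x^2 * (r0:ℤ)^2 + 1 := (Dvd.intro _ rfl).trans h4Mx
  obtain ⟨c4, hc4⟩ := h4x
  have hxodd : Odd x := by
    rcases Int.even_or_odd x with he | ho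
    · exfalso
      obtain ⟨k, hk⟩ := he
      have : (4:ℤ) ∣ 1 := ⟨c4 - 3*k^2*(r0:ℤ)^2, by rw [hk] at hc4; linear_combination hc4⟩
      norm_num at this
    · exact ho
  obtain ⟨j, hj⟩ := hxodd
  -- coprimality of 3x² with 4^s r0²
  have cx2 : IsCoprime x (2:ℤ) := ⟨1, -j, by linear_combination hj⟩
  have cx4s : IsCoprime x ((4:ℤ)^s) := by
    have h2s : IsCoprime x ((2:ℤ)^(2*s)) := cx2.pow_right
    have h44 : ((4:ℤ))^s = (2:ℤ)^(2*s) := by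
      rw [pow_mul]; norm_num
    rwa [h44]
  have cxr0 : IsCoprime x ((r0:ℤ)) := by
    obtain ⟨k1, hk1⟩ := hx1
    exact ⟨1, -k1, by linear_combination hk1⟩
  have c34s : IsCoprime (3:ℤ) ((4:ℤ)^s) :=
    IsCoprime.pow_right ⟨-1, 1, by ring⟩
  have c3r0 : IsCoprime (3:ℤ) ((r0:ℤ)) := by
    have hn : Nat.Coprime 3 r0 := by
      apply aux_nat_coprime
      intro p hpp hpa hpb
      have hp3 : p = 3 := (Nat.prime_dvd_prime_iff_eq hpp (by norm_num)).mp hpa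
      subst hp3
      have := (hr0 3 (by norm_num) hpb).2
      omega
    exact_mod_cast Nat.isCoprime_iff_coprime.mpr hn
  have cfin : IsCoprime (3 * x^2) ((4:ℤ)^s * (r0:ℤ)^2) :=
    IsCoprime.mul_left (c34s.mul_right (c3r0.pow_right))
      (IsCoprime.pow_left (cx4s.mul_right (cxr0.pow_right)))
  obtain ⟨a, b, hab⟩ := id cfin
  obtain ⟨c, hc⟩ := h4Mx
  refine ⟨a * c, x, ?_⟩
  refine Int.modEq_zero_iff_dvd.mpr ⟨c * b, ?_⟩
  have hrz : (r : ℤ) = 2^s * (q:ℤ) * (r0:ℤ) := by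
    rw [hrfac]; push_cast; ring
  rw [hdz, hrz]
  rw [show ((2:ℤ)^s*(q:ℤ)*(r0:ℤ))^2 = (4:ℤ)^s*(q:ℤ)^2*(r0:ℤ)^2 from by
    rw [mul_pow, mul_pow, ← pow_mul, mul_comm s 2, pow_mul]; norm_num]
  linear_combination hc - (4*(m:ℤ)*(q:ℤ)^2*c) * hab
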